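/- Let r ∈ (1,∞). For a nonnegative radial, radially decreasing function g on ℝⁿ, the following are equivalent: (1) g ∈ L^{r,∞}(ℝⁿ); (2) the convolution operator T_g(f) = g ∗ f is bounded from L¹(ℝⁿ) to L^{r,∞}(ℝⁿ). -/

import Mathlib

open MeasureTheory Metric Set Filter
open scoped ENNReal Topology

/-- The weak `L^{p,∞}` quasinorm of `f` restricted to a set `A`. -/
noncomputable def wnormOn {α : Type*} [MeasurableSpace α] (μ : Measure α)
    (f : α → ℝ) (p : ℝ) (A : Set α) : ℝ≥0∞ :=
  ⨆ (l : ℝ) (_ : 0 < l), ENNReal.ofReal l * (μ (A ∩ {x | l < |f x|})) ^ (1 / p)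

private lemma ofReal_norm_eq_coe_nnnorm {E : Type*} [NormedAddCommGroup E] (a : E) :
    ENNReal.ofReal ‖a‖ = (‖a‖₊ : ℝ≥0∞) := ENNReal.ofReal_eq_coe_nnreal _

private lemma aux_inv {m A : ℝ≥0∞} {s ρ : ℝ} (hs : 0 < s) (hρ : 0 < ρ) :
    ENNReal.ofReal s * m ^ (1/ρ) ≤ A ↔ m ≤ (A / ENNReal.ofReal s) ^ ρ := by
  rw [one_div, ← ENNReal.rpow_le_rpow_iff (show (0:ℝ) < ρ⁻¹ by positivity) (x := m),
    ENNReal.rpow_rpow_inv hρ.ne' (A / ENNReal.ofReal s),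
    ENNReal.le_div_iff_mul_le (Or.inl (ENNReal.ofReal_pos.2 hs).ne') (Or.inl ENNReal.ofReal_ne_top),
    mul_comm]


private lemma real_alg {r l Fr : ℝ} (hr1 : 1 < r) (hl : 0 < l) (hFr : 0 < Fr) :
    l * (((l / (2*Fr)) ^ (1-r) * (r/(r-1)) * Fr) / (l/2)) ^ (1/r)
      = (2 * (r/(r-1)) ^ (1/r)) * Fr := by
  have hs : 0 < r - 1 := by linarith
  have hr0 : 0 < r := by linarith
  have h2F : (0:ℝ) < 2*Fr := by positivity
  have e1 : (l / (2*Fr)) ^ (1-r) = (2*Fr) ^ (r-1) / l ^ (r-1) := by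
    rw [show (1-r) = -(r-1) by ring, Real.rpow_neg (by positivity), ← Real.inv_rpow (by positivity),
      inv_div, Real.div_rpow h2F.le hl.le]
  have e2 : ((l / (2*Fr)) ^ (1-r) * (r/(r-1)) * Fr) / (l/2)
      = (2^r * (r/(r-1)) * Fr^r) / l^r := by
    rw [e1, show r = (r-1)+1 by ring, Real.rpow_add_one (by norm_num : (2:ℝ) ≠ 0),
      Real.rpow_add_one hl.ne', Real.rpow_add_one hFr.ne',
      Real.mul_rpow (by norm_num) hFr.le]
    have hlr : l ^ (r-1) ≠ 0 := by positivity
    field_simp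
    ring
  rw [e2, Real.div_rpow (by positivity) (by positivity),
    Real.mul_rpow (by positivity) (by positivity),
    Real.mul_rpow (by positivity) (by positivity),
    one_div, Real.rpow_rpow_inv (by norm_num) hr0.ne', Real.rpow_rpow_inv hFr.le hr0.ne',
    Real.rpow_rpow_inv hl.le hr0.ne']
  field_simp


private lemma layercake_bound {n : ℕ} {r : ℝ} (hr1 : 1 < r) {g1 : EuclideanSpace ℝ (Fin n) → ℝ}
    (hg1m : Measurable g1) (hg1nn : ∀ x, 0 ≤ g1 x)
    {a : ℝ≥0∞} (ha : a ≠ ⊤) {M : ℝ} (hM : 0 < M)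
    (hlev : ∀ t : ℝ, 0 < t → volume {x | t < g1 x} ≤ (a / ENNReal.ofReal (max t M)) ^ r) :
    ∫⁻ z, ENNReal.ofReal (g1 z) ≤ a ^ r * ENNReal.ofReal (M ^ (1-r) * (r/(r-1))) := by
  have hr0 : 0 < r := by linarith
  have hs : 0 < r - 1 := by linarith
  rw [lintegral_eq_lintegral_meas_lt volume (Filter.Eventually.of_forall hg1nn) hg1m.aemeasurable]
  calc ∫⁻ t in Ioi (0:ℝ), volume {x | t < g1 x}
      ≤ ∫⁻ t in Ioi (0:ℝ), (a / ENNReal.ofReal (max t M)) ^ r := by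
        refine setLIntegral_mono' measurableSet_Ioi fun t ht => hlev t ht
    _ = (∫⁻ t in Ioc (0:ℝ) M, (a / ENNReal.ofReal (max t M)) ^ r)
        + ∫⁻ t in Ioi M, (a / ENNReal.ofReal (max t M)) ^ r := by
        rw [← lintegral_union measurableSet_Ioi (Set.Ioc_disjoint_Ioi le_rfl),
          Set.Ioc_union_Ioi_eq_Ioi hM.le]
    _ ≤ a ^ r * ENNReal.ofReal (M ^ (1-r)) + a ^ r * ENNReal.ofReal (M ^ (1-r) / (r-1)) := by
        gcongr
        · -- Ioc part
          rw [setLIntegral_congr_fun measurableSet_Ioc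
            (fun t (ht : t ∈ Ioc (0:ℝ) M) => by rw [max_eq_right ht.2])]
          rw [setLIntegral_const, Real.volume_Ioc, sub_zero,
            ENNReal.div_rpow_of_nonneg _ _ hr0.le, ENNReal.div_eq_inv_mul,
            ENNReal.ofReal_rpow_of_pos hM, ← ENNReal.ofReal_inv_of_pos (by positivity)]
          refine le_of_eq ?_
          rw [mul_comm (ENNReal.ofReal (M^r)⁻¹) (a^r), mul_assoc,
            ← ENNReal.ofReal_mul (by positivity)]
          congr 2
          rw [← Real.rpow_neg hM.le, show (1-r:ℝ) = -r+1 by ring, Real.rpow_add_one hM.ne']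
        · -- Ioi part
          rw [setLIntegral_congr_fun measurableSet_Ioi
            (fun t (ht : t ∈ Ioi M) => by rw [max_eq_left (le_of_lt ht)])]
          have hptwise : ∀ t ∈ Ioi M, (a / ENNReal.ofReal t) ^ r = a ^ r * ENNReal.ofReal (t ^ (-r)) := by
            intro t ht
            have ht0 : 0 < t := hM.trans ht
            rw [ENNReal.div_rpow_of_nonneg _ _ hr0.le, ENNReal.div_eq_inv_mul,
              ENNReal.ofReal_rpow_of_pos ht0, ← ENNReal.ofReal_inv_of_pos (by positivity),
              ← Real.rpow_neg ht0.le, mul_comm]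
          rw [setLIntegral_congr_fun measurableSet_Ioi hptwise,
            lintegral_const_mul' _ _ (ENNReal.rpow_ne_top_of_nonneg hr0.le ha)]
          gcongr
          have hint : IntegrableOn (fun t : ℝ => t ^ (-r)) (Ioi M) :=
            integrableOn_Ioi_rpow_of_lt (by linarith) hM
          rw [← ofReal_integral_eq_lintegral_ofReal hint
            ((ae_restrict_iff' measurableSet_Ioi).2 (Filter.Eventually.of_forall
              fun t ht => (Real.rpow_pos_of_pos (hM.trans ht) _).le))]
          rw [integral_Ioi_rpow_of_lt (by linarith) hM]
          refine ENNReal.ofReal_le_ofReal (le_of_eq ?_)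
          rw [show (-r+1 : ℝ) = -(r-1) by ring, neg_div_neg_eq, show (-(r-1) : ℝ) = 1-r by ring]
    _ = a ^ r * ENNReal.ofReal (M ^ (1-r) * (r/(r-1))) := by
        rw [← mul_add, ← ENNReal.ofReal_add (by positivity) (by positivity)]
        congr 2
        field_simp
        ring


private lemma fwd_aux {n : ℕ} {r : ℝ} (hr1 : 1 < r) {g : EuclideanSpace ℝ (Fin n) → ℝ}
    (hg0 : ∀ x, 0 ≤ g x) (hgm : Measurable g)
    (hfin : wnormOn volume g r Set.univ < ⊤) :
    ∃ C : ℝ≥0∞, C < ⊤ ∧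
      ∀ f : EuclideanSpace ℝ (Fin n) → ℝ, Integrable f →
        ∀ l : ℝ, 0 < l →
          ENNReal.ofReal l *
              (volume {x : EuclideanSpace ℝ (Fin n) | l < |∫ y, g (x - y) * f y|}) ^ (1 / r)
            ≤ C * ENNReal.ofReal (∫ y, |f y|) := by
  have hr0 : 0 < r := by linarith
  set a := wnormOn volume g r Set.univ with ha
  have haT : a ≠ ⊤ := hfin.ne
  have hweak : ∀ s : ℝ, 0 < s → volume {x | s < g x} ≤ (a / ENNReal.ofReal s) ^ r := by
    intro s hs
    rw [← aux_inv hs hr0]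
    have hset : {x : EuclideanSpace ℝ (Fin n) | s < g x}
        = Set.univ ∩ {x | s < |g x|} := by
      ext x; simp [abs_of_nonneg (hg0 x)]
    rw [hset, ha, wnormOn]
    exact le_iSup₂ (f := fun (l : ℝ) (_ : 0 < l) =>
      ENNReal.ofReal l * (volume (Set.univ ∩ {x | l < |g x|})) ^ (1/r)) s hs
  refine ⟨a * ENNReal.ofReal (2 * (r/(r-1)) ^ (1/r)), ?_, ?_⟩
  · exact ENNReal.mul_lt_top hfin ENNReal.ofReal_lt_top
  intro f hf l hl
  -- replace f by a measurable representative
  obtain ⟨hfm, hff'⟩ : StronglyMeasurable (hf.1.mk f) ∧ f =ᵐ[volume] hf.1.mk f :=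
    ⟨hf.1.stronglyMeasurable_mk, hf.1.ae_eq_mk⟩
  set f' := hf.1.mk f with hf'def
  have hf' : Integrable f' := hf.congr hff'
  have hconv : ∀ x, (∫ y, g (x - y) * f y) = ∫ y, g (x - y) * f' y := fun x =>
    integral_congr_ae (hff'.mono fun y hy => by simp only [hy])
  have hFr : (∫ y, |f y|) = ∫ y, |f' y| :=
    integral_congr_ae (hff'.mono fun y hy => by simp only [hy])
  simp only [hconv, hFr]
  set Fr := ∫ y, |f' y| with hFrdef
  by_cases hF0 : Fr = 0
  · -- trivial case : f vanishes a.e.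
    have hf0 : ∀ᵐ y ∂(volume), |f' y| = 0 := by
      have := (integral_eq_zero_iff_of_nonneg (fun y => abs_nonneg (f' y)) hf'.abs).1 hF0
      filter_upwards [this] with y hy using hy
    have hzero : ∀ x, (∫ y, g (x - y) * f' y) = 0 := by
      intro x
      refine integral_eq_zero_of_ae ?_
      filter_upwards [hf0] with y hy
      simp [abs_eq_zero.1 hy]
    simp only [hzero]
    have : {x : EuclideanSpace ℝ (Fin n) | l < |(0:ℝ)|} = ∅ := by
      ext x; simp; linarith
    rw [this, measure_empty, ENNReal.zero_rpow_of_pos (by positivity : (0:ℝ) < 1/r), mul_zero]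
    exact zero_le
  have hFrpos : 0 < Fr := lt_of_le_of_ne (integral_nonneg fun y => abs_nonneg _) (Ne.symm hF0)
  set M := l / (2 * Fr) with hM
  have hM0 : 0 < M := by positivity
  set g1 : EuclideanSpace ℝ (Fin n) → ℝ := fun x => if M < g x then g x else 0 with hg1
  have hg1m : Measurable g1 := Measurable.ite (measurableSet_lt measurable_const hgm)
    hgm measurable_const
  have hg1nn : ∀ x, 0 ≤ g1 x := fun x => by
    by_cases h : M < g x <;> simp [hg1, h, hg0 x]
  have hgle : ∀ x, ENNReal.ofReal (g x) ≤ ENNReal.ofReal M + ENNReal.ofReal (g1 x) := by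
    intro x
    by_cases h : M < g x
    · simp only [hg1, if_pos h]; exact le_add_self
    · push_neg at h
      exact le_trans (ENNReal.ofReal_le_ofReal h) le_self_add
  set F : ℝ≥0∞ := ∫⁻ y, ‖f' y‖₊ with hFdef
  have hFF : F = ENNReal.ofReal Fr := by
    rw [hFdef, hFrdef, ofReal_integral_eq_lintegral_ofReal hf'.abs
      (Filter.Eventually.of_forall fun y => abs_nonneg _)]
    refine lintegral_congr fun y => ?_
    rw [← ofReal_norm_eq_coe_nnnorm, Real.norm_eq_abs]
  set H1 : EuclideanSpace ℝ (Fin n) → ℝ≥0∞ :=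
    fun x => ∫⁻ y, ENNReal.ofReal (g1 (x - y)) * ‖f' y‖₊ with hH1
  have hker : Measurable (Function.uncurry fun (x y : EuclideanSpace ℝ (Fin n)) =>
      ENNReal.ofReal (g1 (x - y)) * (‖f' y‖₊ : ℝ≥0∞)) := by
    refine Measurable.mul (f := fun p : EuclideanSpace ℝ (Fin n) × EuclideanSpace ℝ (Fin n) =>
      ENNReal.ofReal (g1 (p.1 - p.2))) (g := fun p => (‖f' p.2‖₊ : ℝ≥0∞)) ?_ ?_
    · exact ENNReal.measurable_ofReal.comp (hg1m.comp (measurable_fst.sub measurable_snd))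
    · exact (measurable_coe_nnreal_ennreal.comp (hfm.measurable.nnnorm.comp measurable_snd))
  have hH1m : Measurable H1 := hker.lintegral_prod_right
  have hMF : ENNReal.ofReal M * F = ENNReal.ofReal (l/2) := by
    rw [hFF, ← ENNReal.ofReal_mul hM0.le]
    congr 1
    field_simp [hM]
    rw [hM]; field_simp
  have step1 : ∀ x, l < |∫ y, g (x - y) * f' y| → ENNReal.ofReal (l/2) ≤ H1 x := by
    intro x hx
    have h1 : ENNReal.ofReal l < (‖∫ y, g (x - y) * f' y‖₊ : ℝ≥0∞) := by
      rw [← ofReal_norm_eq_coe_nnnorm, Real.norm_eq_abs]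
      exact (ENNReal.ofReal_lt_ofReal_iff (hl.trans hx)).2 hx
    have h2 : (‖∫ y, g (x - y) * f' y‖₊ : ℝ≥0∞)
        ≤ ∫⁻ y, ENNReal.ofReal (g (x - y)) * ‖f' y‖₊ := by
      refine (enorm_integral_le_lintegral_enorm _).trans_eq ?_
      refine lintegral_congr fun y => ?_
      change ((‖g (x - y) * f' y‖₊ : ℝ≥0∞)) = _
      rw [nnnorm_mul, ENNReal.coe_mul, ← ofReal_norm_eq_coe_nnnorm (g (x-y)),
        Real.norm_of_nonneg (hg0 _)]
    have h3 : (∫⁻ y, ENNReal.ofReal (g (x - y)) * ‖f' y‖₊)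
        ≤ ENNReal.ofReal (l/2) + H1 x := by
      calc ∫⁻ y, ENNReal.ofReal (g (x - y)) * ‖f' y‖₊
          ≤ ∫⁻ y, (ENNReal.ofReal M + ENNReal.ofReal (g1 (x - y))) * ‖f' y‖₊ :=
            lintegral_mono fun y => mul_le_mul_left (hgle _) _
        _ = ∫⁻ y, (ENNReal.ofReal M * ‖f' y‖₊ + ENNReal.ofReal (g1 (x - y)) * ‖f' y‖₊) := by
            refine lintegral_congr fun y => ?_; ring
        _ = ENNReal.ofReal M * F + H1 x := by
            rw [lintegral_add_left (hfm.measurable.nnnorm.coe_nnreal_ennreal.const_mul _)]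
            rw [lintegral_const_mul' _ _ ENNReal.ofReal_ne_top]
        _ = ENNReal.ofReal (l/2) + H1 x := by rw [hMF]
    by_contra hcon
    push_neg at hcon
    have hll : ENNReal.ofReal l < ENNReal.ofReal (l/2) + ENNReal.ofReal (l/2) :=
      lt_of_lt_of_le (h1.trans_le (h2.trans h3)) (add_le_add_right hcon.le _)
    rw [← ENNReal.ofReal_add (by positivity) (by positivity)] at hll
    have := (ENNReal.ofReal_lt_ofReal_iff (by positivity)).1 hll
    linarith
  have hsub : {x : EuclideanSpace ℝ (Fin n) | l < |∫ y, g (x - y) * f' y|}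
      ⊆ {x | ENNReal.ofReal (l/2) ≤ H1 x} := fun x hx => step1 x hx
  have cheb : ENNReal.ofReal (l/2) * volume {x | ENNReal.ofReal (l/2) ≤ H1 x} ≤ ∫⁻ x, H1 x :=
    mul_meas_ge_le_lintegral₀ hH1m.aemeasurable _
  have swap : ∫⁻ x, H1 x = (∫⁻ z, ENNReal.ofReal (g1 z)) * F := by
    rw [hH1]
    rw [lintegral_lintegral_swap hker.aemeasurable]
    have inner : ∀ y, (∫⁻ x, ENNReal.ofReal (g1 (x - y)) * ‖f' y‖₊)
        = (∫⁻ z, ENNReal.ofReal (g1 z)) * ‖f' y‖₊ := by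
      intro y
      have hg1y : Measurable fun x : EuclideanSpace ℝ (Fin n) => ENNReal.ofReal (g1 (x - y)) :=
        (hg1m.comp (measurable_id.sub measurable_const)).ennreal_ofReal
      rw [lintegral_mul_const _ hg1y]
      congr 1
      have h := lintegral_add_right_eq_self (μ := (volume : Measure (EuclideanSpace ℝ (Fin n))))
        (fun z => ENNReal.ofReal (g1 z)) (-y)
      simpa [sub_eq_add_neg] using h
    simp_rw [inner]
    rw [lintegral_const_mul _ hfm.measurable.nnnorm.coe_nnreal_ennreal]
  have hlev : ∀ t : ℝ, 0 < t → volume {x | t < g1 x} ≤ (a / ENNReal.ofReal (max t M)) ^ r := by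
    intro t ht
    have hset : {x : EuclideanSpace ℝ (Fin n) | t < g1 x} = {x | max t M < g x} := by
      ext x
      simp only [Set.mem_setOf_eq, hg1]
      constructor
      · intro hx
        by_cases h : M < g x
        · rw [if_pos h] at hx; exact max_lt hx h
        · rw [if_neg h] at hx; linarith
      · intro hx
        have h1 : M < g x := lt_of_le_of_lt (le_max_right t M) hx
        rw [if_pos h1]
        exact lt_of_le_of_lt (le_max_left t M) hx
    rw [hset]
    exact hweak _ (lt_of_lt_of_le hM0 (le_max_right t M))
  have I1 : ∫⁻ z, ENNReal.ofReal (g1 z) ≤ a ^ r * ENNReal.ofReal (M ^ (1-r) * (r/(r-1))) :=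
    layercake_bound hr1 hg1m hg1nn haT hM0 hlev
  have hmeas : volume {x : EuclideanSpace ℝ (Fin n) | l < |∫ y, g (x - y) * f' y|}
      ≤ (a ^ r * ENNReal.ofReal (M ^ (1-r) * (r/(r-1))) * ENNReal.ofReal Fr)
        / ENNReal.ofReal (l/2) := by
    rw [ENNReal.le_div_iff_mul_le (Or.inl (ENNReal.ofReal_pos.2 (by positivity)).ne')
      (Or.inl ENNReal.ofReal_ne_top)]
    calc volume {x : EuclideanSpace ℝ (Fin n) | l < |∫ y, g (x - y) * f' y|}
          * ENNReal.ofReal (l/2)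
        ≤ volume {x | ENNReal.ofReal (l/2) ≤ H1 x} * ENNReal.ofReal (l/2) := by
          gcongr
      _ = ENNReal.ofReal (l/2) * volume {x | ENNReal.ofReal (l/2) ≤ H1 x} := mul_comm _ _
      _ ≤ ∫⁻ x, H1 x := cheb
      _ = (∫⁻ z, ENNReal.ofReal (g1 z)) * F := swap
      _ ≤ a ^ r * ENNReal.ofReal (M ^ (1-r) * (r/(r-1))) * ENNReal.ofReal Fr := by
          rw [hFF]
          exact mul_le_mul_left I1 _
  have hs : (0:ℝ) < r - 1 := by linarith
  have hrr : (0:ℝ) < r/(r-1) := div_pos hr0 hs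
  set Y := M ^ (1-r) * (r/(r-1)) * Fr / (l/2) with hYdef
  have hYpos : 0 < Y := div_pos (mul_pos (mul_pos (Real.rpow_pos_of_pos hM0 _) hrr) hFrpos)
    (by linarith)
  have e1 : (a ^ r * ENNReal.ofReal (M ^ (1-r) * (r/(r-1))) * ENNReal.ofReal Fr)
      / ENNReal.ofReal (l/2) = a ^ r * ENNReal.ofReal Y := by
    rw [mul_assoc, ← ENNReal.ofReal_mul (mul_nonneg (Real.rpow_nonneg hM0.le _) hrr.le),
      mul_div_assoc, ← ENNReal.ofReal_div_of_pos (by linarith : (0:ℝ) < l/2), hYdef]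
  have e2 : (a ^ r * ENNReal.ofReal Y) ^ (1/r) = a * ENNReal.ofReal (Y ^ (1/r)) := by
    rw [ENNReal.mul_rpow_of_nonneg _ _ (one_div_pos.2 hr0).le, ← ENNReal.rpow_mul,
      mul_one_div_cancel hr0.ne', ENNReal.rpow_one,
      ENNReal.ofReal_rpow_of_nonneg hYpos.le (one_div_pos.2 hr0).le]
  have e3 : l * Y ^ (1/r) = (2*(r/(r-1))^(1/r)) * Fr := by
    rw [hYdef, hM]
    exact real_alg hr1 hl hFrpos
  calc ENNReal.ofReal l * (volume {x : EuclideanSpace ℝ (Fin n) | l < |∫ y, g (x - y) * f' y|}) ^ (1/r)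
      ≤ ENNReal.ofReal l * ((a ^ r * ENNReal.ofReal (M ^ (1-r) * (r/(r-1))) * ENNReal.ofReal Fr)
          / ENNReal.ofReal (l/2)) ^ (1/r) :=
        mul_le_mul_right (ENNReal.rpow_le_rpow hmeas (one_div_pos.2 hr0).le) _
    _ = ENNReal.ofReal l * (a * ENNReal.ofReal (Y ^ (1/r))) := by rw [e1, e2]
    _ = a * ENNReal.ofReal (l * Y ^ (1/r)) := by
        rw [← mul_assoc, mul_comm (ENNReal.ofReal l) a, mul_assoc,
          ← ENNReal.ofReal_mul hl.le]
    _ = a * (ENNReal.ofReal (2*(r/(r-1))^(1/r)) * ENNReal.ofReal Fr) := by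
        rw [e3, ENNReal.ofReal_mul (by positivity)]
    _ = a * ENNReal.ofReal (2 * (r/(r-1)) ^ (1/r)) * ENNReal.ofReal Fr := (mul_assoc _ _ _).symm

private lemma bwd_aux {m : ℕ} {r : ℝ} (hr1 : 1 < r)
    {g : EuclideanSpace ℝ (Fin (m+1)) → ℝ}
    (hg0 : ∀ x, 0 ≤ g x) (hgm : Measurable g)
    {G : ℝ → ℝ} (hgG : ∀ x : EuclideanSpace ℝ (Fin (m+1)), g x = G ‖x‖)
    (hGanti : AntitoneOn G (Set.Ici 0))
    {C : ℝ≥0∞} (hC : C < ⊤)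
    (hb : ∀ f : EuclideanSpace ℝ (Fin (m+1)) → ℝ, Integrable f → ∀ l : ℝ, 0 < l →
      ENNReal.ofReal l *
          (volume {x : EuclideanSpace ℝ (Fin (m+1)) | l < |∫ y, g (x - y) * f y|}) ^ (1 / r)
        ≤ C * ENNReal.ofReal (∫ y, |f y|)) :
    wnormOn volume g r Set.univ < ⊤ := by
  have hr0 : 0 < r := by linarith
  suffices h : ∀ l : ℝ, 0 < l →
      ENNReal.ofReal l * (volume (Set.univ ∩ {x : EuclideanSpace ℝ (Fin (m+1)) | l < |g x|})) ^ (1/r) ≤ C by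
    exact lt_of_le_of_lt (iSup₂_le h) hC
  intro l hl
  rw [Set.univ_inter]
  have habs : {x : EuclideanSpace ℝ (Fin (m+1)) | l < |g x|} = {x | l < g x} := by
    ext x; simp [abs_of_nonneg (hg0 x)]
  rw [habs]
  -- key estimate from testing against small balls
  have key : ∀ ε : ℝ, 0 < ε →
      ENNReal.ofReal l * (volume {x : EuclideanSpace ℝ (Fin (m+1)) | l < G (‖x‖ + ε)}) ^ (1/r) ≤ C := by
    intro ε hε
    set V := volume (ball (0:EuclideanSpace ℝ (Fin (m+1))) ε) with hV
    have hVpos : 0 < V := measure_ball_pos _ _ hε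
    have hVlt : V < ⊤ := measure_ball_lt_top
    set Vr := V.toReal with hVr
    have hVrpos : 0 < Vr := ENNReal.toReal_pos hVpos.ne' hVlt.ne
    set fε : EuclideanSpace ℝ (Fin (m+1)) → ℝ :=
      (ball (0:EuclideanSpace ℝ (Fin (m+1))) ε).indicator (fun _ => (1:ℝ)) with hfε
    have hfint : Integrable fε := by
      rw [hfε, integrable_indicator_iff measurableSet_ball]
      exact integrableOn_const hVlt.ne
    have habsf : (∫ y, |fε y|) = Vr := by
      have habs1 : ∀ y, |fε y| = fε y := fun y => abs_of_nonneg
        (Set.indicator_nonneg (fun _ _ => zero_le_one) y)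
      simp only [habs1]
      rw [hfε, integral_indicator measurableSet_ball, setIntegral_const, smul_eq_mul, mul_one]; rfl
    have hconvlb : ∀ x : EuclideanSpace ℝ (Fin (m+1)), l < G (‖x‖ + ε) →
        l * Vr < |∫ y, g (x - y) * fε y| := by
      intro x hx
      have hgb : ∀ z : EuclideanSpace ℝ (Fin (m+1)), ‖g z‖ ≤ G 0 := by
        intro z
        rw [Real.norm_eq_abs, abs_of_nonneg (hg0 z), hgG]
        exact hGanti (mem_Ici.2 le_rfl) (mem_Ici.2 (norm_nonneg z)) (norm_nonneg z)
      have hio : IntegrableOn (fun y => g (x - y)) (ball (0:EuclideanSpace ℝ (Fin (m+1))) ε) := by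
        refine Measure.integrableOn_of_bounded (M := G 0) hVlt.ne
          ((hgm.comp (measurable_const.sub measurable_id)).aestronglyMeasurable) ?_
        exact ae_of_all _ (fun y => hgb _)
      have heq : (∫ y, g (x - y) * fε y)
          = ∫ y in ball (0:EuclideanSpace ℝ (Fin (m+1))) ε, g (x - y) := by
        rw [hfε, ← integral_indicator measurableSet_ball]
        congr 1; funext y
        by_cases hy : y ∈ ball (0:EuclideanSpace ℝ (Fin (m+1))) ε <;>
          simp [Set.indicator_apply, hy]
      have hlow : Vr * G (‖x‖ + ε) ≤ ∫ y in ball (0:EuclideanSpace ℝ (Fin (m+1))) ε, g (x - y) := by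
        have hmono : ∀ y ∈ ball (0:EuclideanSpace ℝ (Fin (m+1))) ε, G (‖x‖ + ε) ≤ g (x - y) := by
          intro y hy
          rw [hgG]
          refine hGanti (mem_Ici.2 (norm_nonneg _))
            (mem_Ici.2 (by have := norm_nonneg x; linarith)) ?_
          have hyε : ‖y‖ < ε := mem_ball_zero_iff.1 hy
          calc ‖x - y‖ ≤ ‖x‖ + ‖y‖ := norm_sub_le x y
            _ ≤ ‖x‖ + ε := by linarith
        calc Vr * G (‖x‖ + ε)
            = ∫ _ in ball (0:EuclideanSpace ℝ (Fin (m+1))) ε, G (‖x‖ + ε) := by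
              rw [setIntegral_const, smul_eq_mul]; rfl
          _ ≤ ∫ y in ball (0:EuclideanSpace ℝ (Fin (m+1))) ε, g (x - y) :=
              setIntegral_mono_on (integrableOn_const hVlt.ne) hio measurableSet_ball hmono
      calc l * Vr = Vr * l := mul_comm l Vr
        _ < Vr * G (‖x‖ + ε) := mul_lt_mul_of_pos_left hx hVrpos
        _ ≤ ∫ y in ball (0:EuclideanSpace ℝ (Fin (m+1))) ε, g (x - y) := hlow
        _ ≤ |∫ y in ball (0:EuclideanSpace ℝ (Fin (m+1))) ε, g (x - y)| := le_abs_self _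
        _ = |∫ y, g (x - y) * fε y| := by rw [heq]
    have h1 := hb fε hfint (l * Vr) (by positivity)
    rw [habsf] at h1
    have hsub2 : {x : EuclideanSpace ℝ (Fin (m+1)) | l < G (‖x‖ + ε)}
        ⊆ {x | l * Vr < |∫ y, g (x - y) * fε y|} := fun x hx => hconvlb x hx
    have h2 : ENNReal.ofReal (l*Vr) *
        (volume {x : EuclideanSpace ℝ (Fin (m+1)) | l < G (‖x‖ + ε)}) ^ (1/r)
        ≤ C * ENNReal.ofReal Vr :=
      le_trans (mul_le_mul_right
        (ENNReal.rpow_le_rpow (measure_mono hsub2) (one_div_pos.2 hr0).le) _) h1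
    rw [ENNReal.ofReal_mul hl.le] at h2
    have hVne : ENNReal.ofReal Vr ≠ 0 := (ENNReal.ofReal_pos.2 hVrpos).ne'
    have h3 : (ENNReal.ofReal l *
        (volume {x : EuclideanSpace ℝ (Fin (m+1)) | l < G (‖x‖ + ε)}) ^ (1/r)) * ENNReal.ofReal Vr
        ≤ C * ENNReal.ofReal Vr := by
      calc (ENNReal.ofReal l *
          (volume {x : EuclideanSpace ℝ (Fin (m+1)) | l < G (‖x‖ + ε)}) ^ (1/r)) * ENNReal.ofReal Vr
          = ENNReal.ofReal l * ENNReal.ofReal Vr *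
            (volume {x : EuclideanSpace ℝ (Fin (m+1)) | l < G (‖x‖ + ε)}) ^ (1/r) := by ring
        _ ≤ C * ENNReal.ofReal Vr := h2
    exact (ENNReal.mul_le_mul_iff_left hVne ENNReal.ofReal_ne_top).1 h3
  by_cases hbdd : BddAbove {t : ℝ | 0 ≤ t ∧ l < G t}
  · by_cases hS : {t : ℝ | 0 ≤ t ∧ l < G t}.Nonempty
    · set ρ := sSup {t : ℝ | 0 ≤ t ∧ l < G t} with hρ
      have hsubcb : {x : EuclideanSpace ℝ (Fin (m+1)) | l < g x} ⊆ closedBall 0 ρ := by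
        intro x hx
        rw [mem_closedBall_zero_iff]
        exact le_csSup hbdd ⟨norm_nonneg x, by rw [← hgG]; exact hx⟩
      have hcb : volume (closedBall (0:EuclideanSpace ℝ (Fin (m+1))) ρ)
          = volume (ball (0:EuclideanSpace ℝ (Fin (m+1))) ρ) :=
        Measure.addHaar_closedBall_eq_addHaar_ball volume 0 ρ
      have hunion : ball (0:EuclideanSpace ℝ (Fin (m+1))) ρ
          = ⋃ k : ℕ, ball (0:EuclideanSpace ℝ (Fin (m+1))) (ρ - 1/(k+1)) := by
        ext x
        simp only [mem_ball_zero_iff, mem_iUnion]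
        constructor
        · intro hx
          obtain ⟨k, hk⟩ := exists_nat_one_div_lt (sub_pos.2 hx)
          exact ⟨k, by push_cast at hk ⊢; linarith⟩
        · rintro ⟨k, hk⟩
          have hkp : (0:ℝ) < 1/((k:ℝ)+1) := by positivity
          push_cast at hk
          linarith
      rw [aux_inv hl hr0]
      calc volume {x : EuclideanSpace ℝ (Fin (m+1)) | l < g x}
          ≤ volume (closedBall (0:EuclideanSpace ℝ (Fin (m+1))) ρ) := measure_mono hsubcb
        _ = volume (ball (0:EuclideanSpace ℝ (Fin (m+1))) ρ) := hcb
        _ = ⨆ k : ℕ, volume (ball (0:EuclideanSpace ℝ (Fin (m+1))) (ρ - 1/(k+1))) := by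
            rw [hunion]
            refine Directed.measure_iUnion (Monotone.directed_le fun j k hjk => ?_)
            refine ball_subset_ball ?_
            have : 1/((k:ℝ)+1) ≤ 1/((j:ℝ)+1) := by
              apply one_div_le_one_div_of_le (by positivity)
              exact_mod_cast by omega
            linarith
        _ ≤ (C / ENNReal.ofReal l) ^ r := by
            refine iSup_le fun k => ?_
            rw [← aux_inv hl hr0]
            refine le_trans (mul_le_mul_right
              (ENNReal.rpow_le_rpow (measure_mono ?_) (one_div_pos.2 hr0).le) _)
              (key (1/(k+1)) (by positivity))
            intro x hx
            have hxn : ‖x‖ < ρ - 1/(k+1) := mem_ball_zero_iff.1 hx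
            have hlt : ‖x‖ + 1/((k:ℝ)+1) < ρ := by push_cast at hxn ⊢; linarith
            obtain ⟨s, hsS, hlts⟩ := exists_lt_of_lt_csSup hS hlt
            exact lt_of_lt_of_le hsS.2
              (hGanti (mem_Ici.2 (by positivity)) (mem_Ici.2 hsS.1) hlts.le)
    · have hempty : {x : EuclideanSpace ℝ (Fin (m+1)) | l < g x} = ∅ := by
        rw [Set.eq_empty_iff_forall_notMem]
        intro x hx
        exact hS ⟨‖x‖, norm_nonneg x, by rw [← hgG]; exact hx⟩
      rw [hempty, measure_empty, ENNReal.zero_rpow_of_pos (by positivity), mul_zero]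
      exact zero_le
  · have huniv : {x : EuclideanSpace ℝ (Fin (m+1)) | l < G (‖x‖ + 1)} = Set.univ := by
      ext x
      simp only [mem_univ, iff_true, mem_setOf_eq]
      obtain ⟨s, ⟨hs0, hsl⟩, hgt⟩ := not_bddAbove_iff.1 hbdd (‖x‖ + 1)
      exact lt_of_lt_of_le hsl
        (hGanti (mem_Ici.2 (by have := norm_nonneg x; linarith)) (mem_Ici.2 hs0) hgt.le)
    refine le_trans (mul_le_mul_right
      (ENNReal.rpow_le_rpow (measure_mono (Set.subset_univ _)) (one_div_pos.2 hr0).le) _) ?_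
    rw [← huniv]
    exact key 1 one_pos

/-- For a nonnegative radial, radially decreasing `g` and `r ∈ (1,∞)`:
`g ∈ L^{r,∞}(ℝⁿ)` iff the convolution operator `T_g f = g ∗ f` is bounded
from `L¹(ℝⁿ)` to `L^{r,∞}(ℝⁿ)`. -/
theorem stmt_17 {n : ℕ} (r : ℝ) (hr1 : 1 < r)
    (g : EuclideanSpace ℝ (Fin n) → ℝ) (hg0 : ∀ x, 0 ≤ g x)
    (G : ℝ → ℝ) (hgG : ∀ x : EuclideanSpace ℝ (Fin n), g x = G ‖x‖)
    (hGanti : AntitoneOn G (Set.Ici 0)) :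
    wnormOn volume g r Set.univ < ⊤ ↔
      ∃ C : ℝ≥0∞, C < ⊤ ∧
        ∀ f : EuclideanSpace ℝ (Fin n) → ℝ, Integrable f →
          ∀ l : ℝ, 0 < l →
            ENNReal.ofReal l *
                (volume {x : EuclideanSpace ℝ (Fin n) | l < |∫ y, g (x - y) * f y|}) ^ (1 / r)
              ≤ C * ENNReal.ofReal (∫ y, |f y|) := by
  have hr0 : (0:ℝ) < r := by linarith
  have hgm : Measurable g := by
    have hanti : Antitone (fun t : ℝ => G (max t 0)) := fun s t hst =>
      hGanti (mem_Ici.2 (le_max_right s 0)) (mem_Ici.2 (le_max_right t 0)) (max_le_max hst le_rfl)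
    have hgeq : g = fun x => G (max ‖x‖ 0) :=
      funext fun x => by rw [hgG, max_eq_left (norm_nonneg x)]
    rw [hgeq]
    exact hanti.measurable.comp measurable_norm
  constructor
  · intro h
    exact fwd_aux hr1 hg0 hgm h
  · rintro ⟨C, hC, hb⟩
    cases n with
    | zero =>
        have hG0 : 0 ≤ G 0 := by have h0 := hg0 0; rwa [hgG, norm_zero] at h0
        have huniv1 : (volume : Measure (EuclideanSpace ℝ (Fin 0))) Set.univ = 1 := by
          have h := ((EuclideanSpace.volume_preserving_symm_measurableEquiv_toLp (Fin 0)).measure_preimage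
            (MeasurableSet.univ (α := Fin 0 → ℝ)).nullMeasurableSet)
          simp only [Set.preimage_univ] at h
          rw [h]
          simp [volume_pi, Measure.pi_univ]
        refine lt_of_le_of_lt (iSup₂_le fun l hl => ?_)
          (show ENNReal.ofReal (G 0) < ⊤ from ENNReal.ofReal_lt_top)
        by_cases hcase : l < G 0
        · calc ENNReal.ofReal l * (volume (Set.univ ∩ {x : EuclideanSpace ℝ (Fin 0) | l < |g x|})) ^ (1/r)
              ≤ ENNReal.ofReal l * (volume (Set.univ : Set (EuclideanSpace ℝ (Fin 0)))) ^ (1/r) :=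
                mul_le_mul_right (ENNReal.rpow_le_rpow (measure_mono Set.inter_subset_left)
                  (one_div_pos.2 hr0).le) _
            _ = ENNReal.ofReal l := by rw [huniv1, ENNReal.one_rpow, mul_one]
            _ ≤ ENNReal.ofReal (G 0) := ENNReal.ofReal_le_ofReal hcase.le
        · have hempty : Set.univ ∩ {x : EuclideanSpace ℝ (Fin 0) | l < |g x|} = ∅ := by
            rw [Set.univ_inter, Set.eq_empty_iff_forall_notMem]
            intro x hx
            have hx0 : x = 0 := Subsingleton.elim x 0
            rw [Set.mem_setOf_eq, hx0, hgG, norm_zero, abs_of_nonneg hG0] at hx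
            exact hcase hx
          rw [hempty, measure_empty, ENNReal.zero_rpow_of_pos (by positivity), mul_zero]
          exact zero_le
    | succ m => exact bwd_aux hr1 hg0 hgm hgG hGanti hC hb
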